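/- Under the setting of the relative value iteration above (V_0 ≡ 0, V_{t+1}(S) = min{f(S)+βV_t(S+1), f(S)+λ+aV_t(S+1)} − f(0) − (1−α)V_t(1) for S ≥ 1, with f non-decreasing, 0 < a < β < 1, λ ≥ 0), define ΔV_{t+1}(S) = (f(S)+λ+aV_t(S+1)) − (f(S)+βV_t(S+1)) = λ + (a−β)V_t(S+1). Then for every t, ΔV_{t+1} is non-increasing in S; consequently the set of states where transmitting is (weakly) preferred, {S ≥ 1 : ΔV_{t+1}(S) ≤ 0}, is an upward-closed subset of ℕ (i.e., the optimal policy at each iteration is a threshold policy). -/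
import Mathlib


theorem stmt11 (f : ℕ → ℝ) (hf0 : ∀ k, 0 ≤ f k) (hfmono : Monotone f)
    (a β α lam : ℝ) (ha0 : 0 < a) (hab : a < β) (hβ1 : β < 1)
    (hα : α ∈ Set.Ioo (0 : ℝ) 1) (hlam : 0 ≤ lam)
    (V : ℕ → ℕ → ℝ)
    (hV0 : ∀ S, V 0 S = 0)
    (hVz : ∀ t, V (t + 1) 0 = 0)
    (hVrec : ∀ t S, 1 ≤ S → V (t + 1) S =
      min (f S + β * V t (S + 1)) (f S + lam + a * V t (S + 1)) - f 0 - (1 - α) * V t 1)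
    (Δ : ℕ → ℕ → ℝ)
    (hΔ : ∀ t S, Δ (t + 1) S = lam + (a - β) * V t (S + 1)) :
    ∀ t, (∀ S₁ S₂ : ℕ, S₁ ≤ S₂ → Δ (t + 1) S₂ ≤ Δ (t + 1) S₁) ∧
      ∀ S S' : ℕ, 1 ≤ S → S ≤ S' → Δ (t + 1) S ≤ 0 → Δ (t + 1) S' ≤ 0 := by
  have hVmono : ∀ t, ∀ S₁ S₂ : ℕ, 1 ≤ S₁ → S₁ ≤ S₂ → V t S₁ ≤ V t S₂ := by
    intro t
    induction t with
    | zero => intro S₁ S₂ _ _; simp [hV0]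
    | succ t ih =>
      intro S₁ S₂ h1 h12
      rw [hVrec t S₁ h1, hVrec t S₂ (le_trans h1 h12)]
      have hV := ih (S₁ + 1) (S₂ + 1) (by omega) (by omega)
      have hff := hfmono h12
      have h1' : f S₁ + β * V t (S₁ + 1) ≤ f S₂ + β * V t (S₂ + 1) := by
        have := mul_le_mul_of_nonneg_left hV (le_of_lt (lt_trans ha0 hab))
        linarith
      have h2' : f S₁ + lam + a * V t (S₁ + 1) ≤ f S₂ + lam + a * V t (S₂ + 1) := by
        have := mul_le_mul_of_nonneg_left hV ha0.le
        linarith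
      have := min_le_min h1' h2'
      linarith
  intro t
  have hmono : ∀ S₁ S₂ : ℕ, S₁ ≤ S₂ → Δ (t + 1) S₂ ≤ Δ (t + 1) S₁ := by
    intro S₁ S₂ h
    rw [hΔ, hΔ]
    have hV := hVmono t (S₁ + 1) (S₂ + 1) (by omega) (by omega)
    nlinarith
  exact ⟨hmono, fun S S' _ hSS' h0 => le_trans (hmono S S' hSS') h0⟩
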